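/- Let (X,‖·‖) be a Banach space, f : ℝ → X continuous and bounded, m ∈ ℕ (m ≥ 1), 0 < α < 1, and n ∈ ℕ with n^{1−α} > 2. Then for every x ∈ ℝ, ‖Ā_n(f,x) − f(x)‖ ≤ ω₁(f, 1/n^α) + ‖f‖_{∞,ℝ}/(2m(n^{1−α} − 2)^{2m}); consequently the same bound holds for sup_{x∈ℝ} ‖Ā_n(f,x) − f(x)‖, and if f is in addition uniformly continuous then Ā_n(f) → f uniformly as n → ∞. -/

import Mathlib

open scoped BigOperators
open Real Filter

/-- The algebraic sigmoid function `φ(x) = x / (1 + x^(2m))^(1/(2m))`. -/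
noncomputable def phi (m : ℕ) (x : ℝ) : ℝ :=
  x / (1 + x ^ (2 * m)) ^ ((1 : ℝ) / (2 * m))

/-- The activation function `Φ(x) = (φ(x+1) - φ(x-1))/4`. -/
noncomputable def Phi (m : ℕ) (x : ℝ) : ℝ :=
  (phi m (x + 1) - phi m (x - 1)) / 4

/-- First modulus of continuity of `f` on the set `s`, with step `δ`. -/
noncomputable def omega1 {X : Type*} [NormedAddCommGroup X] (f : ℝ → X) (s : Set ℝ)
    (δ : ℝ) : ℝ :=
  sSup {r : ℝ | ∃ x ∈ s, ∃ y ∈ s, |x - y| ≤ δ ∧ r = ‖f x - f y‖}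

/-- Sup norm of `f` over a set `s`. -/
noncomputable def supNorm {X : Type*} [NormedAddCommGroup X] (f : ℝ → X) (s : Set ℝ) : ℝ :=
  ⨆ t : s, ‖f t‖

/-- The neural network operator `A_n` induced by the density `Φ`. -/
noncomputable def An {X : Type*} [NormedAddCommGroup X] [Module ℝ X]
    (m : ℕ) (a b : ℝ) (n : ℕ) (f : ℝ → X) (x : ℝ) : X :=
  (∑ k ∈ Finset.Icc ⌈(n : ℝ) * a⌉ ⌊(n : ℝ) * b⌋, Phi m ((n : ℝ) * x - (k : ℝ)))⁻¹ •
    ∑ k ∈ Finset.Icc ⌈(n : ℝ) * a⌉ ⌊(n : ℝ) * b⌋,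
      Phi m ((n : ℝ) * x - (k : ℝ)) • f ((k : ℝ) / n)

/-- The quasi-interpolation neural network operator `Ā_n`. -/
noncomputable def AnBar {X : Type*} [NormedAddCommGroup X] [Module ℝ X]
    (m : ℕ) (n : ℕ) (f : ℝ → X) (x : ℝ) : X :=
  ∑' k : ℤ, Phi m ((n : ℝ) * x - (k : ℝ)) • f ((k : ℝ) / n)

namespace NNaux

lemma pow2m_nonneg (m : ℕ) (x : ℝ) : 0 ≤ x ^ (2 * m) :=
  (even_two_mul m).pow_nonneg x

lemma base_pos (m : ℕ) (x : ℝ) : (0:ℝ) < 1 + x ^ (2 * m) := by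
  have := pow2m_nonneg m x; linarith

lemma phi_eq (m : ℕ) (hm : 1 ≤ m) {x : ℝ} (hx : 0 ≤ x) :
    phi m x = (x ^ (2*m) / (1 + x ^ (2*m))) ^ ((1:ℝ)/(2*m)) := by
  have h2m : (2*(m:ℝ)) ≠ 0 := by
    have : (0:ℝ) < m := by exact_mod_cast Nat.pos_of_ne_zero (by omega)
    positivity
  have hx2 : x = (x ^ (2*m) : ℝ) ^ ((1:ℝ)/(2*m)) := by
    rw [← Real.rpow_natCast x (2*m), ← Real.rpow_mul hx]
    push_cast
    rw [mul_one_div, div_self h2m, Real.rpow_one]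
  rw [Real.div_rpow (pow2m_nonneg m x) (base_pos m x).le]
  unfold phi
  rw [← hx2]

lemma phi_odd (m : ℕ) (x : ℝ) : phi m (-x) = - phi m x := by
  unfold phi
  rw [(even_two_mul m).neg_pow, neg_div]

lemma phi_nonneg (m : ℕ) {x : ℝ} (hx : 0 ≤ x) : 0 ≤ phi m x :=
  div_nonneg hx (Real.rpow_pos_of_pos (base_pos m x) _).le

lemma phi_le_one (m : ℕ) (hm : 1 ≤ m) (x : ℝ) : phi m x ≤ 1 := by
  rcases le_total x 0 with hx | hx
  · have : phi m x ≤ 0 := div_nonpos_of_nonpos_of_nonneg hx (Real.rpow_pos_of_pos (base_pos m x) _).le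
    linarith
  · rw [phi_eq m hm hx]
    apply Real.rpow_le_one (by positivity)
    · rw [div_le_one (base_pos m x)]; linarith
    · positivity

lemma neg_one_le_phi (m : ℕ) (hm : 1 ≤ m) (x : ℝ) : -1 ≤ phi m x := by
  have := phi_le_one m hm (-x)
  rw [phi_odd] at this
  linarith

lemma phi_mono (m : ℕ) (hm : 1 ≤ m) : Monotone (phi m) := by
  have key : ∀ a b : ℝ, 0 ≤ a → a ≤ b → phi m a ≤ phi m b := by
    intro a b ha hab
    rw [phi_eq m hm ha, phi_eq m hm (ha.trans hab)]
    apply Real.rpow_le_rpow (by positivity)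
    · rw [div_le_div_iff₀ (base_pos m a) (base_pos m b)]
      have : a ^ (2*m) ≤ b ^ (2*m) := pow_le_pow_left₀ ha hab _
      nlinarith [pow2m_nonneg m a, pow2m_nonneg m b]
    · positivity
  intro a b hab
  rcases le_total 0 a with ha | ha
  · exact key a b ha hab
  · rcases le_total 0 b with hb | hb
    · calc phi m a ≤ 0 := by
            have : 0 ≤ phi m (-a) := phi_nonneg m (by linarith)
            rw [phi_odd] at this; linarith
        _ ≤ phi m b := phi_nonneg m hb
    · have : phi m (-b) ≤ phi m (-a) := key (-b) (-a) (by linarith) (by linarith)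
      rw [phi_odd, phi_odd] at this; linarith

lemma one_sub_phi_le (m : ℕ) (hm : 1 ≤ m) {t : ℝ} (ht : 0 < t) :
    1 - phi m t ≤ 1 / (2 * m * t ^ (2*m)) := by
  set A : ℝ := t ^ (2*m) with hA
  have hA0 : 0 < A := pow_pos ht _
  have hm0 : (1:ℝ) ≤ m := by exact_mod_cast hm
  set p : ℝ := (1:ℝ)/(2*m) with hp
  have hp0 : 0 < p := by positivity
  have hp1 : p ≤ 1 := by
    rw [hp, div_le_one (by positivity)]; linarith
  set u : ℝ := 1/(1+A) with hu
  have hu0 : 0 < u := by positivity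
  have hu1 : u < 1 := by
    rw [hu, div_lt_one (by linarith)]; linarith
  have hphi : phi m t = (1 - u) ^ p := by
    rw [phi_eq m hm ht.le, ← hA]
    congr 1
    rw [hu]
    field_simp
    ring
  -- Bernoulli : (1-u)^(1-p) ≤ 1 - (1-p) u
  have hbern : (1-u) ^ (1-p) ≤ 1 - (1-p)*u := by
    have := rpow_one_add_le_one_add_mul_self (s := -u) (by linarith) (p := 1-p)
      (by linarith) (by linarith)
    rw [show (1:ℝ) + -u = 1 - u by ring] at this
    linarith [this]
  set v : ℝ := (1-u)^p with hv
  set w : ℝ := (1-u)^(1-p) with hw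
  have hvw : v * w = 1 - u := by
    rw [hv, hw, ← Real.rpow_add (by linarith)]
    norm_num
  have hv0 : 0 < v := Real.rpow_pos_of_pos (by linarith) _
  have hw0 : 0 < w := Real.rpow_pos_of_pos (by linarith) _
  -- 1 - v ≤ p * u / (1 - u)
  have hkey : 1 - v ≤ p * u / (1 - u) := by
    have hq0 : (0:ℝ) < 1 - (1-p)*u := by nlinarith
    have h1 : 1 - u ≤ v * (1 - (1-p)*u) := by
      calc 1 - u = v * w := hvw.symm
        _ ≤ v * (1 - (1-p)*u) := by
            exact mul_le_mul_of_nonneg_left hbern hv0.le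
    rw [le_div_iff₀ (by linarith : (0:ℝ) < 1 - u)]
    nlinarith [h1, hq0, mul_pos hp0 hu0, hu0, hu1, hp0, hp1, hv0]
  have hfin : p * u / (1 - u) = 1 / (2 * m * A) := by
    rw [hp, hu]
    field_simp
    ring_nf
    exact mul_inv_cancel₀ hA0.ne'
  calc 1 - phi m t = 1 - v := by rw [hphi]
    _ ≤ p * u / (1 - u) := hkey
    _ = 1 / (2 * m * A) := hfin
    _ = 1 / (2 * m * t ^ (2*m)) := by rw [hA]

lemma Phi_nonneg (m : ℕ) (hm : 1 ≤ m) (x : ℝ) : 0 ≤ Phi m x := by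
  unfold Phi
  have := phi_mono m hm (show x - 1 ≤ x + 1 by linarith)
  linarith

lemma Phi_even (m : ℕ) (x : ℝ) : Phi m (-x) = Phi m x := by
  unfold Phi
  rw [show -x + 1 = -(x-1) by ring, show -x - 1 = -(x+1) by ring, phi_odd, phi_odd]
  ring

lemma phi_tendsto_bot (m : ℕ) (hm : 1 ≤ m) (c : ℝ) :
    Tendsto (fun N : ℕ => phi m (c - N)) atTop (nhds (-1)) := by
  have h1 : Tendsto (fun N : ℕ => (N:ℝ) - c) atTop atTop :=
    Filter.tendsto_atTop_add_const_right atTop (-c) tendsto_natCast_atTop_atTop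
  have hinv : Tendsto (fun N : ℕ => ((N:ℝ) - c)⁻¹) atTop (nhds 0) :=
    h1.inv_tendsto_atTop
  have hupper : Tendsto (fun N : ℕ => -1 + ((N:ℝ) - c)⁻¹) atTop (nhds (-1)) := by
    have := (tendsto_const_nhds (x := (-1:ℝ)) (f := atTop (α := ℕ))).add hinv
    simpa using this
  apply tendsto_of_tendsto_of_tendsto_of_le_of_le'
      (tendsto_const_nhds (x := (-1:ℝ))) hupper
  · exact Filter.Eventually.of_forall (fun N => neg_one_le_phi m hm _)
  · have hev : ∀ᶠ N : ℕ in atTop, (⌈c⌉₊ + 1 : ℕ) ≤ N := Filter.eventually_atTop.2 ⟨_, fun b hb => hb⟩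
    filter_upwards [hev] with N hN
    have hc : c + 1 ≤ (N:ℝ) := by
      have h2 : ((⌈c⌉₊ + 1 : ℕ) : ℝ) ≤ (N:ℝ) := by exact_mod_cast hN
      have := Nat.le_ceil c
      push_cast at h2
      linarith
    have ht : (1:ℝ) ≤ (N:ℝ) - c := by linarith
    have ht0 : (0:ℝ) < (N:ℝ) - c := by linarith
    have key : 1 - phi m ((N:ℝ) - c) ≤ ((N:ℝ) - c)⁻¹ := by
      have h3 := one_sub_phi_le m hm ht0
      have h4 : ((N:ℝ) - c) ≤ 2 * m * ((N:ℝ) - c) ^ (2*m) := by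
        have h5 : ((N:ℝ) - c) ≤ ((N:ℝ) - c) ^ (2*m) := le_self_pow₀ ht (by omega)
        have h6 : (1:ℝ) ≤ 2 * m := by
          have : (1:ℝ) ≤ (m:ℝ) := by exact_mod_cast hm
          linarith
        nlinarith
      calc 1 - phi m ((N:ℝ) - c) ≤ 1 / (2 * m * ((N:ℝ) - c) ^ (2*m)) := h3
        _ ≤ 1 / ((N:ℝ) - c) := by
            apply one_div_le_one_div_of_le ht0 h4
        _ = ((N:ℝ) - c)⁻¹ := one_div _
    have : phi m (c - N) = - phi m ((N:ℝ) - c) := by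
      rw [show c - (N:ℝ) = -((N:ℝ) - c) by ring, phi_odd]
    rw [this]
    linarith

lemma tele (m : ℕ) (hm : 1 ≤ m) (c : ℝ) :
    HasSum (fun j : ℕ => Phi m (c - j)) ((2 + phi m c + phi m (c+1))/4) := by
  set g : ℕ → ℝ := fun j => phi m (c - j + 1) with hg
  set h : ℕ → ℝ := fun j => phi m (c - j) with hh
  have hpart : ∀ N : ℕ, ∑ j ∈ Finset.range N, Phi m (c - j)
      = (phi m (c+1) + phi m c - phi m (c - N + 1) - phi m (c - N))/4 := by
    intro N
    have e1 : ∀ j ∈ Finset.range N, Phi m (c - j)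
        = (g j - g (j+1))/4 + (h j - h (j+1))/4 := by
      intro j _
      have h1 : g (j+1) = phi m (c - j) := by
        simp only [hg]; congr 1; push_cast; ring
      have h2 : h (j+1) = phi m (c - j - 1) := by
        simp only [hh]; congr 1; push_cast; ring
      rw [h1, h2]
      simp only [hg, hh]
      unfold Phi
      ring
    rw [Finset.sum_congr rfl e1, Finset.sum_add_distrib, ← Finset.sum_div, ← Finset.sum_div,
      Finset.sum_range_sub' g, Finset.sum_range_sub' h]
    have e2 : g 0 = phi m (c + 1) := by simp only [hg]; norm_num
    have e3 : h 0 = phi m c := by simp only [hh]; norm_num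
    have e4 : g N = phi m (c - N + 1) := rfl
    have e5 : h N = phi m (c - N) := rfl
    rw [e2, e3, e4, e5]
    ring
  have hsm : Summable (fun j : ℕ => Phi m (c - j)) := by
    apply summable_of_sum_range_le (c := 1) (fun j => Phi_nonneg m hm _)
    intro N
    rw [hpart N]
    have := phi_le_one m hm (c+1); have := phi_le_one m hm c
    have := neg_one_le_phi m hm (c - N + 1); have := neg_one_le_phi m hm (c - N)
    linarith
  have hlim : Tendsto (fun N : ℕ => ∑ j ∈ Finset.range N, Phi m (c - j)) atTop
      (nhds ((2 + phi m c + phi m (c+1))/4)) := by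
    have l1 : Tendsto (fun N : ℕ => phi m (c - N + 1)) atTop (nhds (-1)) := by
      have := phi_tendsto_bot m hm (c+1)
      apply this.congr
      intro N; congr 1; ring
    have l2 : Tendsto (fun N : ℕ => phi m (c - N)) atTop (nhds (-1)) :=
      phi_tendsto_bot m hm c
    have := (((tendsto_const_nhds (x := phi m (c+1) + phi m c)
        (f := atTop (α := ℕ))).sub l1).sub l2).div_const (4:ℝ)
    have e : (phi m (c+1) + phi m c - -1 - -1)/4 = (2 + phi m c + phi m (c+1))/4 := by ring
    rw [e] at this
    apply this.congr
    intro N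
    rw [hpart N]
  have := tendsto_nhds_unique hsm.hasSum.tendsto_sum_nat hlim
  exact this ▸ hsm.hasSum

lemma tele2 (m : ℕ) (hm : 1 ≤ m) (c : ℝ) :
    HasSum (fun j : ℕ => Phi m (c + j)) ((2 - phi m c - phi m (c-1))/4) := by
  have h := tele m hm (-c)
  have e : (fun j : ℕ => Phi m (-c - j)) = fun j : ℕ => Phi m (c + j) := by
    funext j; rw [show -c - (j:ℝ) = -(c + j) by ring, Phi_even]
  rw [e] at h
  have e2 : (2 + phi m (-c) + phi m (-c+1))/4 = (2 - phi m c - phi m (c-1))/4 := by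
    rw [phi_odd, show -c + 1 = -(c - 1) by ring, phi_odd]
    ring
  rw [e2] at h
  exact h

lemma total (m : ℕ) (hm : 1 ≤ m) (y : ℝ) :
    HasSum (fun k : ℤ => Phi m (y - k)) 1 := by
  have hR : HasSum (fun k : ℤ => if 0 ≤ k then Phi m (y - k) else 0)
      ((2 + phi m y + phi m (y+1))/4) := by
    rw [← Function.Injective.hasSum_iff (f := fun k : ℤ => if 0 ≤ k then Phi m (y - k) else 0)
      (g := fun j : ℕ => (j : ℤ)) (fun a b h => by simpa using h) ?_]
    · have e : ((fun k : ℤ => if 0 ≤ k then Phi m (y - k) else 0) ∘ (fun j : ℕ => (j : ℤ)))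
          = fun j : ℕ => Phi m (y - j) := by
        funext j
        simp [Int.natCast_nonneg]
      rw [e]
      exact tele m hm y
    · intro k hk
      have : ¬ (0 ≤ k) := by
        intro h0
        exact hk ⟨k.toNat, by simp [Int.toNat_of_nonneg h0]⟩
      exact if_neg this
  have hL : HasSum (fun k : ℤ => if k < 0 then Phi m (y - k) else 0)
      ((2 - phi m (y+1) - phi m y)/4) := by
    have hinj : Function.Injective (fun j : ℕ => (-1 - j : ℤ)) := by
      intro a b h
      simp only at h
      omega
    rw [← Function.Injective.hasSum_iff (g := fun j : ℕ => (-1 - j : ℤ)) hinj ?_]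
    · have e : ((fun k : ℤ => if k < 0 then Phi m (y - k) else 0) ∘ (fun j : ℕ => (-1 - j : ℤ)))
          = fun j : ℕ => Phi m ((y + 1) + j) := by
        funext j
        have h1 : (-1 - (j:ℤ) : ℤ) < 0 := by omega
        simp only [Function.comp_apply, if_pos h1]
        congr 1
        push_cast
        ring
      rw [e]
      have := tele2 m hm (y+1)
      simpa using this
    · intro k hk
      have : ¬ (k < 0) := by
        intro h0
        refine hk ⟨(-1 - k).toNat, ?_⟩
        simp only
        omega
      exact if_neg this
  have := hR.add hL
  have e : (fun k : ℤ => (if 0 ≤ k then Phi m (y - k) else 0) + (if k < 0 then Phi m (y - k) else 0))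
      = fun k : ℤ => Phi m (y - k) := by
    funext k
    by_cases h : 0 ≤ k
    · rw [if_pos h, if_neg (by omega), add_zero]
    · rw [if_neg h, if_pos (by omega), zero_add]
  rw [e] at this
  convert this using 1
  ring

lemma tail_est (m : ℕ) (hm : 1 ≤ m) (y s : ℝ) (hs : 1 < s) :
    Summable (fun k : ℤ => if s < |y - k| then Phi m (y - k) else 0) ∧
    ∑' k : ℤ, (if s < |y - k| then Phi m (y - k) else 0) ≤ 1 - phi m (s - 1) := by
  set K : ℤ := ⌊y + s⌋ + 1 with hK
  have hKgt : y + s < (K:ℝ) := by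
    rw [hK]; push_cast; exact Int.lt_floor_add_one _
  have hR : HasSum (fun k : ℤ => if y + s < (k:ℝ) then Phi m (y - k) else 0)
      ((2 + phi m (y - K) + phi m (y - K + 1))/4) := by
    have hinj : Function.Injective (fun j : ℕ => (K + j : ℤ)) := by
      intro a b h; simp only at h; omega
    rw [← Function.Injective.hasSum_iff (g := fun j : ℕ => (K + j : ℤ)) hinj ?_]
    · have e : ((fun k : ℤ => if y + s < (k:ℝ) then Phi m (y - k) else 0) ∘ (fun j : ℕ => (K + j : ℤ)))
          = fun j : ℕ => Phi m ((y - K) - j) := by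
        funext j
        have h1 : y + s < ((K + j : ℤ) : ℝ) := by
          push_cast
          have : (0:ℝ) ≤ (j:ℕ) := Nat.cast_nonneg j
          linarith
        simp only [Function.comp_apply, if_pos h1]
        congr 1
        push_cast
        ring
      rw [e]
      exact tele m hm (y - K)
    · intro k hk
      have : ¬ (y + s < (k:ℝ)) := by
        intro h0
        have hKk : K ≤ k := by
          have : ⌊y + s⌋ < k := Int.floor_lt.2 h0
          omega
        exact hk ⟨(k - K).toNat, by simp only; omega⟩
      exact if_neg this
  set K' : ℤ := ⌈y - s⌉ - 1 with hK'
  have hK'lt : (K':ℝ) < y - s := by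
    rw [hK']; push_cast
    have := Int.ceil_lt_add_one (y - s)
    linarith
  have hL : HasSum (fun k : ℤ => if (k:ℝ) < y - s then Phi m (y - k) else 0)
      ((2 - phi m (y - K') - phi m (y - K' - 1))/4) := by
    have hinj : Function.Injective (fun j : ℕ => (K' - j : ℤ)) := by
      intro a b h; simp only at h; omega
    rw [← Function.Injective.hasSum_iff (g := fun j : ℕ => (K' - j : ℤ)) hinj ?_]
    · have e : ((fun k : ℤ => if (k:ℝ) < y - s then Phi m (y - k) else 0) ∘ (fun j : ℕ => (K' - j : ℤ)))
          = fun j : ℕ => Phi m ((y - K') + j) := by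
        funext j
        have h1 : ((K' - j : ℤ) : ℝ) < y - s := by
          push_cast
          have : (0:ℝ) ≤ (j:ℕ) := Nat.cast_nonneg j
          linarith
        simp only [Function.comp_apply, if_pos h1]
        congr 1
        push_cast
        ring
      rw [e]
      exact tele2 m hm (y - K')
    · intro k hk
      have : ¬ ((k:ℝ) < y - s) := by
        intro h0
        have hKk : k ≤ K' := by
          have : k < ⌈y - s⌉ := Int.lt_ceil.2 h0
          omega
        exact hk ⟨(K' - k).toNat, by simp only; omega⟩
      exact if_neg this
  have hsum := hR.add hL
  have hle : ∀ k : ℤ, (if s < |y - k| then Phi m (y - k) else 0)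
      ≤ (if y + s < (k:ℝ) then Phi m (y - k) else 0) + (if (k:ℝ) < y - s then Phi m (y - k) else 0) := by
    intro k
    have hP := Phi_nonneg m hm (y - k)
    by_cases h : s < |y - k|
    · rw [if_pos h]
      rcases lt_abs.1 h with h1 | h1
      · rw [if_neg (by linarith), if_pos (by linarith)]
        linarith
      · rw [if_pos (by linarith), if_neg (by linarith)]
        linarith
    · rw [if_neg h]
      positivity
  have h0 : ∀ k : ℤ, 0 ≤ (if s < |y - k| then Phi m (y - k) else 0) := by
    intro k
    have hP := Phi_nonneg m hm (y - k)
    positivity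
  have hsm : Summable (fun k : ℤ => if s < |y - k| then Phi m (y - k) else 0) :=
    Summable.of_nonneg_of_le h0 hle hsum.summable
  refine ⟨hsm, ?_⟩
  have hb := Summable.tsum_le_tsum hle hsm hsum.summable
  rw [hsum.tsum_eq] at hb
  have hmono := phi_mono m hm
  have b1 : phi m (y - K) ≤ - phi m (s - 1) := by
    have : phi m (y - K) ≤ phi m (-(s-1)) := hmono (by linarith)
    rwa [phi_odd] at this
  have b2 : phi m (y - K + 1) ≤ - phi m (s - 1) := by
    have : phi m (y - K + 1) ≤ phi m (-(s-1)) := hmono (by linarith)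
    rwa [phi_odd] at this
  have b3 : phi m (s - 1) ≤ phi m (y - K') := hmono (by linarith)
  have b4 : phi m (s - 1) ≤ phi m (y - K' - 1) := hmono (by linarith)
  linarith

set_option maxHeartbeats 1000000 in
lemma main_est {X : Type*} [NormedAddCommGroup X] [NormedSpace ℝ X]
    [CompleteSpace X] (f : ℝ → X)
    (hfb : Bornology.IsBounded (Set.range f)) (m : ℕ) (hm : 1 ≤ m)
    (α : ℝ) (hα0 : 0 < α) (hα1 : α < 1) (n : ℕ) (hn : 2 < (n : ℝ) ^ (1 - α)) (x : ℝ) :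
    ‖AnBar m n f x - f x‖ ≤
      omega1 f Set.univ (1 / (n : ℝ) ^ α) +
        (⨆ y : ℝ, ‖f y‖) / (2 * m * ((n : ℝ) ^ (1 - α) - 2) ^ (2 * m)) := by
  -- basic positivity
  have hn0 : n ≠ 0 := by
    rintro rfl
    rw [Nat.cast_zero, Real.zero_rpow (by linarith)] at hn
    linarith
  have npos : (0:ℝ) < n := by exact_mod_cast Nat.pos_of_ne_zero hn0
  set T : ℝ := (n : ℝ) ^ (1 - α) with hT
  have hT2 : 2 < T := hn
  have hnα : (0:ℝ) < (n:ℝ) ^ α := Real.rpow_pos_of_pos npos α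
  set δ : ℝ := 1 / (n : ℝ) ^ α with hδ
  have hδ0 : 0 < δ := by positivity
  have hδT : δ * (n:ℝ) = T := by
    have h1 : (n:ℝ) = (n:ℝ)^α * T := by
      rw [hT, ← Real.rpow_add npos, show α + (1-α) = 1 by ring, Real.rpow_one]
    rw [hδ]
    field_simp
    linarith [h1]
  -- bounds on f
  obtain ⟨B0, hB0⟩ := isBounded_iff_forall_norm_le.1 hfb
  have hBdd : BddAbove (Set.range fun y : ℝ => ‖f y‖) := by
    refine ⟨B0, ?_⟩
    rintro r ⟨t, rfl⟩
    exact hB0 _ ⟨t, rfl⟩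
  set B : ℝ := ⨆ y : ℝ, ‖f y‖ with hBdef
  have hB : ∀ t : ℝ, ‖f t‖ ≤ B := fun t => le_ciSup hBdd t
  have hB0' : (0:ℝ) ≤ B := (norm_nonneg (f 0)).trans (hB 0)
  -- modulus of continuity
  set S : Set ℝ := {r : ℝ | ∃ a ∈ Set.univ, ∃ b ∈ Set.univ, |a - b| ≤ δ ∧ r = ‖f a - f b‖}
    with hSdef
  have hω_def : omega1 f Set.univ δ = sSup S := rfl
  have hS0 : (0:ℝ) ∈ S := ⟨0, trivial, 0, trivial, by simp [hδ0.le], by simp⟩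
  have hSbdd : BddAbove S := by
    refine ⟨2*B, ?_⟩
    rintro r ⟨a, -, b, -, -, rfl⟩
    calc ‖f a - f b‖ ≤ ‖f a‖ + ‖f b‖ := norm_sub_le _ _
      _ ≤ 2*B := by linarith [hB a, hB b]
  set ω : ℝ := omega1 f Set.univ δ with hωdef
  have hωle : ∀ a b : ℝ, |a - b| ≤ δ → ‖f a - f b‖ ≤ ω := by
    intro a b h
    show _ ≤ sSup S
    exact le_csSup hSbdd ⟨a, trivial, b, trivial, h, rfl⟩
  have hω0 : 0 ≤ ω := le_csSup hSbdd hS0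
  have hω2B : ω ≤ 2*B := by
    show sSup S ≤ 2*B
    refine csSup_le ⟨0, hS0⟩ ?_
    rintro r ⟨a, -, b, -, -, rfl⟩
    calc ‖f a - f b‖ ≤ ‖f a‖ + ‖f b‖ := norm_sub_le _ _
      _ ≤ 2*B := by linarith [hB a, hB b]
  -- chaining
  have hchain : ∀ (i : ℕ) (a b : ℝ), |a - b| ≤ i * δ → ‖f a - f b‖ ≤ i * ω := by
    intro i
    induction i with
    | zero =>
      intro a b h
      simp only [Nat.cast_zero, zero_mul] at h ⊢
      have hab : a = b := by
        have := abs_nonneg (a - b)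
        have h2 : |a - b| = 0 := le_antisymm h this
        have := abs_eq_zero.1 h2
        linarith
      simp [hab]
    | succ i ih =>
      intro a b h
      set c : ℝ := b + (i:ℝ)/((i:ℝ)+1) * (a - b) with hc
      have hip : (0:ℝ) < (i:ℝ)+1 := by positivity
      have h1 : |a - c| ≤ δ := by
        have e : a - c = (a - b)/((i:ℝ)+1) := by rw [hc]; field_simp; ring
        rw [e, abs_div, abs_of_pos hip, div_le_iff₀ hip]
        push_cast at h
        nlinarith [hδ0]
      have h2 : |c - b| ≤ i * δ := by
        have e : c - b = (i:ℝ)/((i:ℝ)+1) * (a - b) := by rw [hc]; ring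
        rw [e, abs_mul, abs_of_nonneg (by positivity : (0:ℝ) ≤ (i:ℝ)/((i:ℝ)+1))]
        rw [div_mul_eq_mul_div, div_le_iff₀ hip]
        push_cast at h
        nlinarith [abs_nonneg (a-b), Nat.cast_nonneg (α := ℝ) i, hδ0]
      calc ‖f a - f b‖ ≤ ‖f a - f c‖ + ‖f c - f b‖ := norm_sub_le_norm_sub_add_norm_sub _ _ _
        _ ≤ ω + i * ω := add_le_add (hωle a c h1) (ih c b h2)
        _ = (i+1 : ℕ) * ω := by push_cast; ring
  -- setup sums
  set y : ℝ := (n:ℝ) * x with hy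
  set Φk : ℤ → ℝ := fun k => Phi m (y - k) with hΦk
  have hΦ := total m hm y
  have sΦ : Summable Φk := hΦ.summable
  have hΦ0 : ∀ k, 0 ≤ Φk k := fun k => Phi_nonneg m hm _
  have sF : Summable (fun k : ℤ => Φk k • f ((k:ℝ)/n)) := by
    apply Summable.of_norm_bounded (sΦ.mul_right B)
    intro k
    rw [norm_smul, Real.norm_eq_abs, abs_of_nonneg (hΦ0 k)]
    exact mul_le_mul_of_nonneg_left (hB _) (hΦ0 k)
  have sC : Summable (fun k : ℤ => Φk k • f x) := by
    apply Summable.of_norm_bounded (sΦ.mul_right B)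
    intro k
    rw [norm_smul, Real.norm_eq_abs, abs_of_nonneg (hΦ0 k)]
    exact mul_le_mul_of_nonneg_left (hB _) (hΦ0 k)
  have key : AnBar m n f x - f x = ∑' k : ℤ, Φk k • (f ((k:ℝ)/n) - f x) := by
    have e1 : ∑' k : ℤ, Φk k • (f ((k:ℝ)/n) - f x)
        = (∑' k : ℤ, Φk k • f ((k:ℝ)/n)) - ∑' k : ℤ, Φk k • f x := by
      rw [← Summable.tsum_sub sF sC]
      congr 1
      funext k
      rw [smul_sub]
    rw [e1, Summable.tsum_smul_const sΦ, hΦ.tsum_eq, one_smul]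
    rfl
  -- region bounds
  set c1 : ℝ := min (2*ω) (2*B) - ω with hc1def
  set c2 : ℝ := min (3*ω) (2*B) - min (2*ω) (2*B) with hc2def
  set c3 : ℝ := 2*B - min (3*ω) (2*B) with hc3def
  have hc1 : 0 ≤ c1 := by
    rw [hc1def, sub_nonneg]
    exact le_min (by linarith) hω2B
  have hc2 : 0 ≤ c2 := by
    rw [hc2def, sub_nonneg]
    exact min_le_min (by linarith) le_rfl
  have hc3 : 0 ≤ c3 := by
    rw [hc3def, sub_nonneg]
    exact min_le_right _ _
  set u : ℤ → ℝ := fun k => ω + (if T < |y - k| then c1 else 0)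
      + (if 2*T < |y - k| then c2 else 0) + (if 3*T < |y - k| then c3 else 0) with hu
  have habs : ∀ k : ℤ, |((k:ℝ)/n) - x| = |y - k| / n := by
    intro k
    rw [hy, show ((k:ℝ)/n) - x = -((y - k)/n) by rw [hy]; field_simp; ring, abs_neg, abs_div,
      abs_of_pos npos]
  have hregion : ∀ (i : ℕ) (k : ℤ), 1 ≤ i → |y - k| ≤ i * T → ‖f ((k:ℝ)/n) - f x‖ ≤ i * ω := by
    intro i k hi hik
    apply hchain i
    rw [habs k, div_le_iff₀ npos]
    calc |y - k| ≤ i * T := hik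
      _ = i * (δ * n) := by rw [hδT]
      _ = i * δ * n := by ring
  have hnormΔ : ∀ k : ℤ, ‖f ((k:ℝ)/n) - f x‖ ≤ 2*B := by
    intro k
    calc ‖f ((k:ℝ)/n) - f x‖ ≤ ‖f ((k:ℝ)/n)‖ + ‖f x‖ := norm_sub_le _ _
      _ ≤ 2*B := by linarith [hB ((k:ℝ)/n), hB x]
  have hΔu : ∀ k : ℤ, ‖f ((k:ℝ)/n) - f x‖ ≤ u k := by
    intro k
    rcases le_or_gt (|y - k|) T with h1 | h1
    · have e : u k = ω := by
        rw [hu]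
        simp only
        rw [if_neg (by linarith), if_neg (by linarith), if_neg (by linarith)]
        ring
      rw [e]
      have := hregion 1 k le_rfl (by rw [Nat.cast_one, one_mul]; exact h1)
      rw [Nat.cast_one, one_mul] at this
      exact this
    · rcases le_or_gt (|y - k|) (2*T) with h2 | h2
      · have e : u k = min (2*ω) (2*B) := by
          rw [hu]
          simp only
          rw [if_pos h1, if_neg (by linarith), if_neg (by linarith)]
          rw [hc1def]; ring
        rw [e]
        refine le_min ?_ (hnormΔ k)
        have := hregion 2 k (by norm_num) (by push_cast; linarith)
        push_cast at this
        linarith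
      · rcases le_or_gt (|y - k|) (3*T) with h3 | h3
        · have e : u k = min (3*ω) (2*B) := by
            rw [hu]
            simp only
            rw [if_pos h1, if_pos h2, if_neg (by linarith)]
            rw [hc1def, hc2def]; ring
          rw [e]
          refine le_min ?_ (hnormΔ k)
          have := hregion 3 k (by norm_num) (by push_cast; linarith)
          push_cast at this
          linarith
        · have e : u k = 2*B := by
            rw [hu]
            simp only
            rw [if_pos h1, if_pos (by linarith), if_pos h3]
            rw [hc1def, hc2def, hc3def]; ring
          rw [e]
          exact hnormΔ k
  -- tail sums
  set g1 : ℤ → ℝ := fun k => if T < |y - k| then Φk k else 0 with hg1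
  set g2 : ℤ → ℝ := fun k => if 2*T < |y - k| then Φk k else 0 with hg2
  set g3 : ℤ → ℝ := fun k => if 3*T < |y - k| then Φk k else 0 with hg3
  have ht1 := tail_est m hm y T (by linarith)
  have ht2 := tail_est m hm y (2*T) (by linarith)
  have ht3 := tail_est m hm y (3*T) (by linarith)
  have hΦu : ∀ k : ℤ, Φk k * u k = ω * Φk k + c1 * g1 k + c2 * g2 k + c3 * g3 k := by
    intro k
    rw [hu, hg1, hg2, hg3]
    simp only
    split_ifs <;> ring
  have sg1 : Summable g1 := ht1.1
  have sg2 : Summable g2 := ht2.1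
  have sg3 : Summable g3 := ht3.1
  have sΦu : Summable (fun k => Φk k * u k) := by
    rw [show (fun k : ℤ => Φk k * u k)
        = fun k => ω * Φk k + c1 * g1 k + c2 * g2 k + c3 * g3 k from funext hΦu]
    exact (((sΦ.mul_left ω).add (sg1.mul_left c1)).add (sg2.mul_left c2)).add (sg3.mul_left c3)
  have snorm : Summable (fun k : ℤ => ‖Φk k • (f ((k:ℝ)/n) - f x)‖) := by
    apply Summable.of_nonneg_of_le (fun k => norm_nonneg _) (fun k => ?_) (sΦ.mul_right (2*B))
    rw [norm_smul, Real.norm_eq_abs, abs_of_nonneg (hΦ0 k)]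
    exact mul_le_mul_of_nonneg_left (hnormΔ k) (hΦ0 k)
  have step1 : ‖AnBar m n f x - f x‖ ≤ ∑' k : ℤ, Φk k * u k := by
    rw [key]
    calc ‖∑' k : ℤ, Φk k • (f ((k:ℝ)/n) - f x)‖
        ≤ ∑' k : ℤ, ‖Φk k • (f ((k:ℝ)/n) - f x)‖ := norm_tsum_le_tsum_norm snorm
      _ ≤ ∑' k : ℤ, Φk k * u k := by
          apply Summable.tsum_le_tsum ?_ snorm sΦu
          intro k
          rw [norm_smul, Real.norm_eq_abs, abs_of_nonneg (hΦ0 k)]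
          exact mul_le_mul_of_nonneg_left (hΔu k) (hΦ0 k)
  -- compute the tsum
  have W1nn : 0 ≤ ∑' k, g1 k :=
    tsum_nonneg (fun k => by simp only [hg1]; split_ifs; exacts [hΦ0 k, le_rfl])
  have W2nn : 0 ≤ ∑' k, g2 k :=
    tsum_nonneg (fun k => by simp only [hg2]; split_ifs; exacts [hΦ0 k, le_rfl])
  have W3nn : 0 ≤ ∑' k, g3 k :=
    tsum_nonneg (fun k => by simp only [hg3]; split_ifs; exacts [hΦ0 k, le_rfl])
  have step2 : ∑' k : ℤ, Φk k * u k
      = ω + c1 * (∑' k, g1 k) + c2 * (∑' k, g2 k) + c3 * (∑' k, g3 k) := by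
    rw [show (fun k : ℤ => Φk k * u k)
        = fun k => ω * Φk k + c1 * g1 k + c2 * g2 k + c3 * g3 k from funext hΦu]
    rw [Summable.tsum_add (((sΦ.mul_left ω).add (sg1.mul_left c1)).add (sg2.mul_left c2)) (sg3.mul_left c3)]
    rw [Summable.tsum_add ((sΦ.mul_left ω).add (sg1.mul_left c1)) (sg2.mul_left c2)]
    rw [Summable.tsum_add (sΦ.mul_left ω) (sg1.mul_left c1)]
    rw [tsum_mul_left, tsum_mul_left, tsum_mul_left, tsum_mul_left, hΦ.tsum_eq, mul_one]
  -- bound the tails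
  have hTm1 : (0:ℝ) < T - 1 := by linarith
  set C : ℝ := 1 / (2 * m * (T-1) ^ (2*m)) with hC
  have hmR : (1:ℝ) ≤ (m:ℝ) := by exact_mod_cast hm
  have hCpos : 0 < C := by
    rw [hC]
    have : (0:ℝ) < (T-1)^(2*m) := pow_pos hTm1 _
    positivity
  have tail_bound : ∀ s : ℝ, 1 < s → (∑' k : ℤ, (if s < |y - k| then Φk k else 0))
      ≤ 1 / (2 * m * (s-1) ^ (2*m)) := by
    intro s hs
    calc (∑' k : ℤ, (if s < |y - k| then Φk k else 0)) ≤ 1 - phi m (s - 1) :=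
          (tail_est m hm y s hs).2
      _ ≤ 1 / (2 * m * (s-1) ^ (2*m)) := one_sub_phi_le m hm (by linarith)
  have hW1 : ∑' k, g1 k ≤ C := by
    rw [hg1, hC]
    exact tail_bound T (by linarith)
  have pow_ineq : ∀ (i : ℝ), 1 ≤ i → ∀ s : ℝ, i * (T - 1) ≤ s - 1 →
      1 / (2 * m * (s-1) ^ (2*m)) ≤ C / (i^(2*m)) := by
    intro i hi s his
    have hiT : (0:ℝ) < i * (T-1) := mul_pos (lt_of_lt_of_le one_pos hi) hTm1
    have h1 : (i * (T-1))^(2*m) ≤ (s-1)^(2*m) := pow_le_pow_left₀ hiT.le his _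
    rw [mul_pow] at h1
    have hipow : (0:ℝ) < i ^ (2*m) := pow_pos (by linarith) _
    have hTpow : (0:ℝ) < (T-1) ^ (2*m) := pow_pos hTm1 _
    have e : C / i^(2*m) = 1 / (2 * m * (T-1)^(2*m) * i^(2*m)) := by
      rw [hC, div_div]
    rw [e]
    apply one_div_le_one_div_of_le (by positivity)
    calc 2 * (m:ℝ) * (T-1)^(2*m) * i^(2*m) = 2*m*(i^(2*m)*(T-1)^(2*m)) := by ring
      _ ≤ 2*m*(s-1)^(2*m) := mul_le_mul_of_nonneg_left h1 (by positivity)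
  have hW2 : ∑' k, g2 k ≤ C / 4 := by
    have h1 : ∑' k, g2 k ≤ 1 / (2 * m * (2*T-1) ^ (2*m)) := by
      rw [hg2]; exact tail_bound (2*T) (by linarith)
    have h2 := pow_ineq 2 (by norm_num) (2*T) (by linarith)
    have h3 : (4:ℝ) ≤ 2^(2*m) := by
      calc (4:ℝ) = 2^2 := by norm_num
        _ ≤ 2^(2*m) := pow_le_pow_right₀ one_le_two (by omega)
    have h4 : C / 2^(2*m) ≤ C / 4 :=
      div_le_div_of_nonneg_left hCpos.le (by norm_num) h3
    linarith
  have hW3 : ∑' k, g3 k ≤ C / 9 := by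
    have h1 : ∑' k, g3 k ≤ 1 / (2 * m * (3*T-1) ^ (2*m)) := by
      rw [hg3]; exact tail_bound (3*T) (by linarith)
    have h2 := pow_ineq 3 (by norm_num) (3*T) (by linarith)
    have h3 : (9:ℝ) ≤ 3^(2*m) := by
      calc (9:ℝ) = 3^2 := by norm_num
        _ ≤ 3^(2*m) := pow_le_pow_right₀ (by norm_num) (by omega)
    have h4 : C / 3^(2*m) ≤ C / 9 := div_le_div_of_nonneg_left hCpos.le (by norm_num) h3
    linarith
  have harith : c1 + c2/4 + c3/9 ≤ B := by
    rw [hc1def, hc2def, hc3def]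
    rcases le_total (2*ω) (2*B) with h2 | h2 <;> rcases le_total (3*ω) (2*B) with h3 | h3
    · rw [min_eq_left h2, min_eq_left h3]; linarith
    · rw [min_eq_left h2, min_eq_right h3]; linarith
    · rw [min_eq_right h2, min_eq_left h3]; linarith
    · rw [min_eq_right h2, min_eq_right h3]; linarith
  have hT2pow : (0:ℝ) < (T-2)^(2*m) := pow_pos (by linarith) _
  have hCC : C ≤ 1 / (2 * m * (T-2) ^ (2*m)) := by
    rw [hC]
    apply one_div_le_one_div_of_le (by positivity)
    exact mul_le_mul_of_nonneg_left (pow_le_pow_left₀ (by linarith) (by linarith) _)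
      (by positivity)
  have final : ω + c1 * (∑' k, g1 k) + c2 * (∑' k, g2 k) + c3 * (∑' k, g3 k)
      ≤ ω + B / (2 * m * (T-2) ^ (2*m)) := by
    have b1 : c1 * (∑' k, g1 k) ≤ c1 * C := mul_le_mul_of_nonneg_left hW1 hc1
    have b2 : c2 * (∑' k, g2 k) ≤ c2 * (C/4) := mul_le_mul_of_nonneg_left hW2 hc2
    have b3 : c3 * (∑' k, g3 k) ≤ c3 * (C/9) := mul_le_mul_of_nonneg_left hW3 hc3
    have hsum : c1 * C + c2 * (C/4) + c3 * (C/9) ≤ B * C := by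
      have e : c1 * C + c2 * (C/4) + c3 * (C/9) = (c1 + c2/4 + c3/9) * C := by ring
      rw [e]
      exact mul_le_mul_of_nonneg_right harith hCpos.le
    have hBC : B * C ≤ B / (2 * m * (T-2)^(2*m)) :=
      (mul_le_mul_of_nonneg_left hCC hB0').trans_eq (mul_one_div _ _)
    have t1 := add_le_add (add_le_add b1 b2) b3
    linarith [t1, hsum, hBC]
  calc ‖AnBar m n f x - f x‖ ≤ ∑' k : ℤ, Φk k * u k := step1
    _ = ω + c1 * (∑' k, g1 k) + c2 * (∑' k, g2 k) + c3 * (∑' k, g3 k) := step2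
    _ ≤ ω + B / (2 * m * (T-2) ^ (2*m)) := final

end NNaux

theorem AnBar_approx (X : Type*) [NormedAddCommGroup X] [NormedSpace ℝ X]
    [CompleteSpace X] (f : ℝ → X) (hf : Continuous f)
    (hfb : Bornology.IsBounded (Set.range f)) (m : ℕ) (hm : 1 ≤ m)
    (α : ℝ) (hα0 : 0 < α) (hα1 : α < 1) (n : ℕ) (hn : 2 < (n : ℝ) ^ (1 - α)) :
    (∀ x : ℝ,
      ‖AnBar m n f x - f x‖ ≤
        omega1 f Set.univ (1 / (n : ℝ) ^ α) +
          (⨆ y : ℝ, ‖f y‖) / (2 * m * ((n : ℝ) ^ (1 - α) - 2) ^ (2 * m))) ∧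
    (⨆ x : ℝ, ‖AnBar m n f x - f x‖) ≤
        omega1 f Set.univ (1 / (n : ℝ) ^ α) +
          (⨆ y : ℝ, ‖f y‖) / (2 * m * ((n : ℝ) ^ (1 - α) - 2) ^ (2 * m)) ∧
    (UniformContinuous f →
      TendstoUniformly (fun (N : ℕ) (x : ℝ) => AnBar m N f x) f atTop) := by
  refine ⟨fun x => NNaux.main_est f hfb m hm α hα0 hα1 n hn x,
    ciSup_le (fun x => NNaux.main_est f hfb m hm α hα0 hα1 n hn x), ?_⟩
  intro huc
  rw [Metric.tendstoUniformly_iff]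
  intro ε hε
  obtain ⟨B0, hB0⟩ := isBounded_iff_forall_norm_le.1 hfb
  have hBdd : BddAbove (Set.range fun y : ℝ => ‖f y‖) := by
    refine ⟨B0, ?_⟩
    rintro r ⟨t, rfl⟩
    exact hB0 _ ⟨t, rfl⟩
  set B : ℝ := ⨆ y : ℝ, ‖f y‖ with hB
  have hBnn : 0 ≤ B := (norm_nonneg (f 0)).trans (le_ciSup hBdd 0)
  obtain ⟨d0, hd0, hd⟩ := Metric.uniformContinuous_iff.1 huc (ε/4) (by linarith)
  have hrt : Tendsto (fun N : ℕ => (N:ℝ) ^ ((1:ℝ)/2)) atTop atTop :=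
    (tendsto_rpow_atTop (by norm_num)).comp tendsto_natCast_atTop_atTop
  have ev1 : ∀ᶠ N : ℕ in atTop, 2 < (N:ℝ)^((1:ℝ)/2) := hrt.eventually_gt_atTop 2
  have ev2 : ∀ᶠ N : ℕ in atTop, 1/d0 < (N:ℝ)^((1:ℝ)/2) := hrt.eventually_gt_atTop _
  have ev3 : ∀ᶠ N : ℕ in atTop, 3 + 4*B/ε < (N:ℝ)^((1:ℝ)/2) := hrt.eventually_gt_atTop _
  filter_upwards [ev1, ev2, ev3] with N h1 h2 h3
  intro x
  have he : (1:ℝ) - (1:ℝ)/2 = (1:ℝ)/2 := by norm_num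
  have hmain := NNaux.main_est f hfb m hm ((1:ℝ)/2) (by norm_num) (by norm_num) N
    (by rw [he]; exact h1) x
  rw [he] at hmain
  set t : ℝ := (N:ℝ)^((1:ℝ)/2) with ht
  have htpos : (0:ℝ) < t := by linarith
  -- first term
  have hωb : omega1 f Set.univ (1/t) ≤ ε/4 := by
    have h1t : 1/t < d0 := by
      have h4 : (0:ℝ) < 1/d0 := by positivity
      have := one_div_lt_one_div_of_lt h4 h2
      rwa [one_div_one_div] at this
    have hne : (0:ℝ) ∈ {r : ℝ | ∃ a ∈ Set.univ, ∃ b ∈ Set.univ, |a - b| ≤ 1/t ∧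
        r = ‖f a - f b‖} := ⟨0, trivial, 0, trivial, by simp [htpos.le], by simp⟩
    refine csSup_le ⟨0, hne⟩ ?_
    rintro r ⟨a, -, b, -, hab, rfl⟩
    have hdab : dist a b < d0 := by
      rw [Real.dist_eq]
      exact lt_of_le_of_lt hab h1t
    have := hd hdab
    rw [dist_eq_norm] at this
    linarith
  -- second term
  have h2m : (2:ℝ) ≤ 2*m := by
    have : (1:ℝ) ≤ (m:ℝ) := by exact_mod_cast hm
    linarith
  have ht2 : (1:ℝ) ≤ t - 2 := by
    have : (0:ℝ) ≤ 4*B/ε := by positivity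
    linarith
  have hpow : t - 2 ≤ (t-2)^(2*m) := le_self_pow₀ ht2 (by omega)
  have hden : 2*(t-2) ≤ 2*m*(t-2)^(2*m) := by nlinarith
  have hterm2 : B / (2 * m * (t - 2) ^ (2*m)) < ε/2 := by
    have hb1 : B / (2 * m * (t - 2) ^ (2*m)) ≤ B / (2*(t-2)) :=
      div_le_div_of_nonneg_left hBnn (by linarith) hden
    have hb2 : B / (2*(t-2)) < ε/2 := by
      rw [div_lt_iff₀ (by linarith : (0:ℝ) < 2*(t-2))]
      have e1 : ε*(1+4*B/ε) = ε + 4*B := by field_simp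
      have e2 : ε*(t-2) > ε*(1+4*B/ε) := by
        apply mul_lt_mul_of_pos_left _ hε
        linarith
      nlinarith
    linarith
  have : ‖AnBar m N f x - f x‖ < ε/4 + ε/2 := by
    calc ‖AnBar m N f x - f x‖ ≤ omega1 f Set.univ (1/t) + B / (2 * m * (t - 2) ^ (2*m)) :=
          hmain
      _ < ε/4 + ε/2 := by
          apply add_lt_add_of_le_of_lt hωb hterm2
  rw [dist_eq_norm, norm_sub_rev]
  linarith
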